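/- Let ρ > 0 and Γ with ρ/2 ≤ Γ ≤ ρ. For any coordinate i, the integral of x_i^2 over the budget set {x ∈ ℝ^n : ‖x‖_1 ≤ ρ, ‖x‖_∞ ≤ Γ} equals (2ρ^2/((n+1)(n+2))) · ((2ρ)^n − n(2(ρ−Γ))^n)/n! − ((2(ρ−Γ))^n/n!) · ((n^2+3n−2)Γ^2 + (4−2n)ρΓ)/((n+1)(n+2)). -/

import Mathlib

open MeasureTheory Set

-- generic slicing lemma
lemma lint_slice {m : ℕ} (i : Fin (m+1)) (F : (Fin (m+1) → ℝ) → ENNReal) (hF : Measurable F) :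
    ∫⁻ x, F x = ∫⁻ t : ℝ, ∫⁻ y : Fin m → ℝ, F (i.insertNth t y) := by
  have hmp := (volume_preserving_piFinSuccAbove (fun _ : Fin (m+1) => ℝ) i).symm
    (MeasurableEquiv.piFinSuccAbove (fun _ : Fin (m+1) => ℝ) i)
  rw [← hmp.lintegral_comp hF]
  rw [Measure.volume_eq_prod, lintegral_prod]
  · simp [MeasurableEquiv.piFinSuccAbove_symm_apply, Fin.insertNthEquiv]
  · exact (hF.comp (MeasurableEquiv.piFinSuccAbove _ i).symm.measurable).aemeasurable

lemma lint_Icc {g : ℝ → ℝ} (hg : Continuous g) {a b : ℝ} (hab : a ≤ b)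
    (hnn : ∀ t ∈ Icc a b, 0 ≤ g t) :
    ∫⁻ t in Icc a b, ENNReal.ofReal (g t) = ENNReal.ofReal (∫ t in a..b, g t) := by
  rw [← ofReal_integral_eq_lintegral_ofReal (hg.integrableOn_Icc)
    (by filter_upwards [ae_restrict_mem measurableSet_Icc] using hnn)]
  rw [intervalIntegral.integral_of_le hab, integral_Icc_eq_integral_Ioc]

lemma int_sym {g : ℝ → ℝ} (hg : Continuous g) {a : ℝ} (ha : 0 ≤ a) :
    ∫ t in (-a)..a, g |t| = 2 * ∫ t in (0:ℝ)..a, g t := by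
  have h1 : ∫ t in (-a)..(0:ℝ), g |t| = ∫ t in (0:ℝ)..a, g t := by
    have := intervalIntegral.integral_comp_neg (a := 0) (b := a) (fun t => g |t|)
    rw [neg_zero] at this
    rw [← this]
    refine intervalIntegral.integral_congr fun x hx => ?_
    rw [uIcc_of_le ha] at hx
    rw [abs_neg, abs_of_nonneg hx.1]
  have h2 : ∫ t in (0:ℝ)..a, g |t| = ∫ t in (0:ℝ)..a, g t := by
    refine intervalIntegral.integral_congr fun x hx => ?_
    rw [uIcc_of_le ha] at hx
    rw [abs_of_nonneg hx.1]
  rw [← intervalIntegral.integral_add_adjacent_intervals (a := -a) (b := 0) (c := a), h1, h2]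
  · ring
  · exact (hg.comp continuous_abs).intervalIntegrable _ _
  · exact (hg.comp continuous_abs).intervalIntegrable _ _

lemma int_pow_sub (s a b : ℝ) (k : ℕ) :
    ∫ t in a..b, (s - t)^k = ((s-a)^(k+1) - (s-b)^(k+1)) / (k+1) := by
  rw [intervalIntegral.integral_comp_sub_left (fun u => u ^ k) s, integral_pow]

def l1b (m : ℕ) (s : ℝ) : Set (Fin m → ℝ) := {x | ∑ k, |x k| ≤ s}

lemma l1b_meas (m : ℕ) (s : ℝ) : MeasurableSet (l1b m s) :=
  (isClosed_le (continuous_finset_sum _ fun k _ => (continuous_apply k).abs)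
    continuous_const).measurableSet

lemma l1b_empty {m : ℕ} {s : ℝ} (hs : s < 0) : l1b m s = ∅ := by
  ext x
  simp only [l1b, mem_setOf_eq, mem_empty_iff_false, iff_false, not_le]
  exact lt_of_lt_of_le hs (Finset.sum_nonneg fun k _ => abs_nonneg _)

lemma insertNth_sum {m : ℕ} (i : Fin (m+1)) (t : ℝ) (y : Fin m → ℝ) :
    ∑ j, |i.insertNth t y j| = |t| + ∑ j, |y j| := by
  rw [Fin.sum_univ_succAbove (fun j => |i.insertNth t y j|) i]
  simp

lemma vol_l1b : ∀ (m : ℕ) (s : ℝ), 0 ≤ s →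
    volume (l1b m s) = ENNReal.ofReal ((2*s)^m / m.factorial) := by
  intro m
  induction m with
  | zero =>
    intro s hs
    have : l1b 0 s = univ := by
      ext x; simp [l1b, hs]
    rw [this, volume_pi, Measure.pi_univ]
    simp
  | succ m ih =>
    intro s hs
    have h1 : volume (l1b (m+1) s) = ∫⁻ x, (l1b (m+1) s).indicator 1 x := by
      rw [lintegral_indicator_one (l1b_meas _ _)]
    rw [h1, lint_slice 0 _ (measurable_one.indicator (l1b_meas _ _))]
    have h2 : ∀ t : ℝ, (∫⁻ y : Fin m → ℝ, (l1b (m+1) s).indicator 1 ((0 : Fin (m+1)).insertNth t y))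
        = volume (l1b m (s - |t|)) := by
      intro t
      have : ∀ y : Fin m → ℝ, (l1b (m+1) s).indicator (1 : (Fin (m+1) → ℝ) → ENNReal)
          ((0 : Fin (m+1)).insertNth t y) = (l1b m (s - |t|)).indicator 1 y := by
        intro y
        simp only [indicator_apply, l1b, mem_setOf_eq, insertNth_sum]
        congr 1
        simp only [eq_iff_iff]
        constructor <;> intro h <;> linarith
      simp_rw [this]
      rw [lintegral_indicator_one (l1b_meas _ _)]
    simp_rw [h2]
    have h3 : (fun t : ℝ => volume (l1b m (s - |t|)))
        = (Icc (-s) s).indicator (fun t => ENNReal.ofReal ((2*(s-|t|))^m / m.factorial)) := by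
      funext t
      by_cases ht : t ∈ Icc (-s) s
      · rw [indicator_of_mem ht]
        exact ih _ (by rw [mem_Icc] at ht; rw [sub_nonneg, abs_le]; exact ht)
      · rw [indicator_of_notMem ht, l1b_empty, measure_empty]
        rw [mem_Icc, not_and_or, not_le, not_le] at ht
        rcases ht with h | h
        · nlinarith [abs_nonneg t, neg_abs_le t]
        · nlinarith [le_abs_self t]
    rw [h3, lintegral_indicator measurableSet_Icc]
    rw [lint_Icc (by fun_prop) (by linarith)
      (fun t ht => by
        have : |t| ≤ s := abs_le.mpr (mem_Icc.mp ht)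
        have h2 : (0:ℝ) ≤ 2*(s-|t|) := by linarith
        exact div_nonneg (pow_nonneg h2 _) (Nat.cast_nonneg _))]
    rw [int_sym (g := fun t => (2*(s-t))^m / m.factorial) (by fun_prop) hs]
    congr 1
    have : ∀ t : ℝ, (2*(s-t))^m / m.factorial = (2^m / m.factorial) * (s-t)^m := by
      intro t; rw [mul_pow]; ring
    simp_rw [this]
    rw [intervalIntegral.integral_const_mul, int_pow_sub]
    have hfac : ((m+1).factorial : ℝ) = (m+1) * m.factorial := by
      rw [Nat.factorial_succ]; push_cast; ring
    have hm : (m.factorial : ℝ) ≠ 0 := Nat.cast_ne_zero.2 m.factorial_ne_zero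
    rw [hfac]
    rw [mul_pow]
    field_simp
    ring

def bud (m : ℕ) (s Γ : ℝ) : Set (Fin m → ℝ) := {x | ∑ k, |x k| ≤ s ∧ ∀ k, |x k| ≤ Γ}

def excc (m : ℕ) (s Γ : ℝ) (k : Fin m) : Set (Fin m → ℝ) := {x | ∑ j, |x j| ≤ s ∧ |x k| ≤ Γ}

def exc (m : ℕ) (s Γ : ℝ) (k : Fin m) : Set (Fin m → ℝ) := {x | ∑ j, |x j| ≤ s ∧ Γ < |x k|}

lemma bud_meas (m : ℕ) (s Γ : ℝ) : MeasurableSet (bud m s Γ) := by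
  have : bud m s Γ = l1b m s ∩ ⋂ k, {x : Fin m → ℝ | |x k| ≤ Γ} := by
    ext x; simp [bud, l1b, mem_iInter]
  rw [this]
  exact (l1b_meas m s).inter (MeasurableSet.iInter fun k =>
    (isClosed_le (continuous_apply k).abs continuous_const).measurableSet)

lemma excc_meas (m : ℕ) (s Γ : ℝ) (k : Fin m) : MeasurableSet (excc m s Γ k) := by
  have : excc m s Γ k = l1b m s ∩ {x : Fin m → ℝ | |x k| ≤ Γ} := by
    ext x; simp [excc, l1b]
  rw [this]
  exact (l1b_meas m s).inter (isClosed_le (continuous_apply k).abs continuous_const).measurableSet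

lemma exc_meas (m : ℕ) (s Γ : ℝ) (k : Fin m) : MeasurableSet (exc m s Γ k) := by
  have : exc m s Γ k = l1b m s ∩ {x : Fin m → ℝ | Γ < |x k|} := by
    ext x; simp [exc, l1b]
  rw [this]
  exact (l1b_meas m s).inter
    ((isOpen_lt continuous_const (continuous_apply k).abs).measurableSet)

-- volume of excc by slicing at coordinate k
lemma vol_excc (m : ℕ) (s Γ : ℝ) (hs : 0 ≤ s) (hΓ : 0 ≤ Γ) (k : Fin (m+1)) :
    volume (excc (m+1) s Γ k) =
      ENNReal.ofReal (((2*s)^(m+1) - (2*max (s-Γ) 0)^(m+1)) / (m+1).factorial) := by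
  set Γ' := min Γ s with hΓ'
  have hΓ'0 : 0 ≤ Γ' := le_min hΓ hs
  have h1 : volume (excc (m+1) s Γ k) = ∫⁻ x, (excc (m+1) s Γ k).indicator 1 x := by
    rw [lintegral_indicator_one (excc_meas _ _ _ _)]
  rw [h1, lint_slice k _ (measurable_one.indicator (excc_meas _ _ _ _))]
  have h2 : ∀ t : ℝ, (∫⁻ y : Fin m → ℝ, (excc (m+1) s Γ k).indicator 1 (k.insertNth t y))
      = if |t| ≤ Γ then volume (l1b m (s - |t|)) else 0 := by
    intro t
    by_cases ht : |t| ≤ Γ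
    · rw [if_pos ht]
      have : ∀ y : Fin m → ℝ, (excc (m+1) s Γ k).indicator (1 : (Fin (m+1) → ℝ) → ENNReal)
          (k.insertNth t y) = (l1b m (s - |t|)).indicator 1 y := by
        intro y
        simp only [indicator_apply, excc, l1b, mem_setOf_eq, insertNth_sum,
          Fin.insertNth_apply_same]
        congr 1
        simp only [eq_iff_iff]
        constructor
        · rintro ⟨h, -⟩; linarith
        · intro h; exact ⟨by linarith, ht⟩
      simp_rw [this]
      rw [lintegral_indicator_one (l1b_meas _ _)]
    · rw [if_neg ht]
      have : ∀ y : Fin m → ℝ, (excc (m+1) s Γ k).indicator (1 : (Fin (m+1) → ℝ) → ENNReal)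
          (k.insertNth t y) = 0 := by
        intro y
        rw [indicator_of_notMem]
        simp only [excc, mem_setOf_eq, Fin.insertNth_apply_same]
        tauto
      simp_rw [this]
      simp
  simp_rw [h2]
  have h3 : (fun t : ℝ => if |t| ≤ Γ then volume (l1b m (s - |t|)) else 0)
      = (Icc (-Γ') Γ').indicator (fun t => ENNReal.ofReal ((2*(s-|t|))^m / m.factorial)) := by
    funext t
    by_cases ht : t ∈ Icc (-Γ') Γ'
    · have habs : |t| ≤ Γ' := abs_le.mpr (mem_Icc.mp ht)
      rw [indicator_of_mem ht, if_pos (habs.trans (min_le_left _ _))]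
      exact vol_l1b _ _ (by have := habs.trans (min_le_right _ _); linarith)
    · rw [indicator_of_notMem ht]
      have habs : Γ' < |t| := by
        rw [mem_Icc, not_and_or, not_le, not_le] at ht
        rcases ht with h | h
        · calc Γ' < -t := by linarith
            _ ≤ |t| := neg_le_abs t
        · exact lt_of_lt_of_le h (le_abs_self t)
      by_cases htΓ : |t| ≤ Γ
      · rw [if_pos htΓ, l1b_empty, measure_empty]
        have : s < |t| := by
          rcases min_lt_iff.mp habs with h | h
          · linarith
          · exact h
        linarith
      · rw [if_neg htΓ]
  rw [h3, lintegral_indicator measurableSet_Icc]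
  rw [lint_Icc (by fun_prop) (by linarith)
    (fun t ht => by
      have h1 : |t| ≤ Γ' := abs_le.mpr (mem_Icc.mp ht)
      have h2 : (0:ℝ) ≤ 2*(s-|t|) := by
        have := h1.trans (min_le_right Γ s); linarith
      exact div_nonneg (pow_nonneg h2 _) (Nat.cast_nonneg _))]
  rw [int_sym (g := fun t => (2*(s-t))^m / m.factorial) (by fun_prop) hΓ'0]
  congr 1
  have : ∀ t : ℝ, (2*(s-t))^m / m.factorial = (2^m / m.factorial) * (s-t)^m := by
    intro t; rw [mul_pow]; ring
  simp_rw [this]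
  rw [intervalIntegral.integral_const_mul, int_pow_sub]
  have hsub : s - Γ' = max (s-Γ) 0 := by
    rcases min_le_iff.mp (le_refl Γ') with _ | _ <;>
    · rcases le_total Γ s with h | h
      · rw [hΓ', min_eq_left h, max_eq_left (by linarith)]
      · rw [hΓ', min_eq_right h, max_eq_right (by linarith)]; ring
  rw [sub_zero, hsub.symm]
  have hfac : (((m+1)).factorial : ℝ) = (m+1) * m.factorial := by
    rw [Nat.factorial_succ]; push_cast; ring
  have hm : (m.factorial : ℝ) ≠ 0 := Nat.cast_ne_zero.2 m.factorial_ne_zero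
  rw [hfac, mul_pow, mul_pow]
  field_simp
  ring

lemma vol_exc (m : ℕ) (s Γ : ℝ) (hs : 0 ≤ s) (hΓ : 0 ≤ Γ) (k : Fin (m+1)) :
    volume (exc (m+1) s Γ k) =
      ENNReal.ofReal ((2*max (s-Γ) 0)^(m+1) / (m+1).factorial) := by
  have hdisj : Disjoint (excc (m+1) s Γ k) (exc (m+1) s Γ k) := by
    rw [disjoint_left]
    rintro x ⟨-, h1⟩ ⟨-, h2⟩
    exact absurd h1 (not_le.mpr h2)
  have hunion : excc (m+1) s Γ k ∪ exc (m+1) s Γ k = l1b (m+1) s := by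
    ext x
    constructor
    · rintro (⟨h, -⟩ | ⟨h, -⟩) <;> exact h
    · intro h
      rcases le_or_gt |x k| Γ with h' | h'
      · exact Or.inl ⟨h, h'⟩
      · exact Or.inr ⟨h, h'⟩
  have hmeq : volume (excc (m+1) s Γ k) + volume (exc (m+1) s Γ k) = volume (l1b (m+1) s) := by
    rw [← measure_union hdisj (exc_meas _ _ _ _), hunion]
  rw [vol_excc _ _ _ hs hΓ, vol_l1b _ _ hs] at hmeq
  have hmax : (0:ℝ) ≤ 2 * max (s-Γ) 0 := by positivity
  have hle : (2*max (s-Γ) 0)^(m+1) ≤ (2*s)^(m+1) := by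
    apply pow_le_pow_left₀ hmax
    have : max (s-Γ) 0 ≤ s := max_le (by linarith) hs
    linarith
  have h1 : (0:ℝ) ≤ ((2*s)^(m+1) - (2*max (s-Γ) 0)^(m+1)) / (m+1).factorial :=
    div_nonneg (by linarith) (Nat.cast_nonneg _)
  have h2 : (0:ℝ) ≤ (2*max (s-Γ) 0)^(m+1) / (m+1).factorial :=
    div_nonneg (pow_nonneg hmax _) (Nat.cast_nonneg _)
  refine (ENNReal.add_right_inj (a := ENNReal.ofReal
    (((2*s)^(m+1) - (2*max (s-Γ) 0)^(m+1)) / (m+1).factorial)) ENNReal.ofReal_ne_top).mp ?_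
  rw [hmeq, ← ENNReal.ofReal_add h1 h2]
  congr 1
  ring

lemma key_le (m : ℕ) (s Γ : ℝ) (h0 : 0 ≤ s) (h2 : s ≤ 2*Γ) :
    (m:ℝ) * (2*max (s-Γ) 0)^m ≤ (2*s)^m := by
  set a := max (s-Γ) 0 with ha
  have ha0 : 0 ≤ a := le_max_right _ _
  have h2a : 2*a ≤ s := by
    rcases le_total (s-Γ) 0 with h | h
    · rw [ha, max_eq_right h]; linarith
    · rw [ha, max_eq_left h]; linarith
  calc (m:ℝ) * (2*a)^m ≤ 2^m * (2*a)^m := by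
        apply mul_le_mul_of_nonneg_right _ (by positivity)
        calc (m:ℝ) ≤ ((2^m : ℕ) : ℝ) := by
              exact_mod_cast (@Nat.lt_two_pow_self m).le
          _ = 2^m := by push_cast; ring
    _ = (2*(2*a))^m := by rw [mul_pow (2:ℝ) (2*a)]
    _ ≤ (2*s)^m := pow_le_pow_left₀ (by positivity) (by linarith) m

lemma vol_bud (m : ℕ) (s Γ : ℝ) (hs : 0 ≤ s) (hΓ : 0 ≤ Γ) (h2 : s ≤ 2*Γ) :
    volume (bud m s Γ) =
      ENNReal.ofReal (((2*s)^m - m*(2*max (s-Γ) 0)^m) / m.factorial) := by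
  cases m with
  | zero =>
    have : bud 0 s Γ = univ := by
      ext x
      simp [bud, hs, Fin.forall_iff_succAbove, Fin.elim0]
    rw [this, volume_pi, Measure.pi_univ]
    simp
  | succ m =>
    have hdisj1 : Disjoint (bud (m+1) s Γ) (⋃ k, exc (m+1) s Γ k) := by
      rw [disjoint_left]
      rintro x ⟨-, h1⟩ hx
      rcases mem_iUnion.mp hx with ⟨k, -, h2'⟩
      exact absurd (h1 k) (not_le.mpr h2')
    have hdisj2 : Pairwise (Function.onFun Disjoint fun k => exc (m+1) s Γ k) := by
      intro j k hjk
      rw [Function.onFun, disjoint_left]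
      rintro x ⟨hsum, hj⟩ ⟨-, hk⟩
      have hpair : |x j| + |x k| ≤ ∑ u, |x u| := by
        have hsub : ({j, k} : Finset (Fin (m+1))) ⊆ Finset.univ := Finset.subset_univ _
        calc |x j| + |x k| = ∑ u ∈ ({j, k} : Finset (Fin (m+1))), |x u| :=
              (Finset.sum_pair (f := fun u => |x u|) hjk).symm
          _ ≤ ∑ u, |x u| := Finset.sum_le_sum_of_subset_of_nonneg hsub
              (fun u _ _ => abs_nonneg _)
      linarith
    have hunion : bud (m+1) s Γ ∪ ⋃ k, exc (m+1) s Γ k = l1b (m+1) s := by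
      ext x
      constructor
      · rintro (⟨h, -⟩ | hx)
        · exact h
        · rcases mem_iUnion.mp hx with ⟨k, h, -⟩
          exact h
      · intro h
        by_cases h' : ∀ k, |x k| ≤ Γ
        · exact Or.inl ⟨h, h'⟩
        · push_neg at h'
          obtain ⟨k, hk⟩ := h'
          exact Or.inr (mem_iUnion.mpr ⟨k, h, hk⟩)
    have hmeq : volume (bud (m+1) s Γ) + ∑ k : Fin (m+1), volume (exc (m+1) s Γ k)
        = volume (l1b (m+1) s) := by
      rw [← hunion, measure_union hdisj1 (MeasurableSet.iUnion fun k => exc_meas _ _ _ _),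
        measure_iUnion hdisj2 fun k => exc_meas _ _ _ _, tsum_fintype]
    have hX2 : (0:ℝ) ≤ (2*max (s-Γ) 0)^(m+1) / (m+1).factorial :=
      div_nonneg (pow_nonneg (by positivity) _) (Nat.cast_nonneg _)
    have hsum2 : ∑ k : Fin (m+1), volume (exc (m+1) s Γ k)
        = ENNReal.ofReal ((m+1) * ((2*max (s-Γ) 0)^(m+1) / (m+1).factorial)) := by
      simp_rw [vol_exc m s Γ hs hΓ]
      rw [Finset.sum_const, Finset.card_univ, Fintype.card_fin, nsmul_eq_mul,
        ← ENNReal.ofReal_natCast (m+1), ← ENNReal.ofReal_mul (Nat.cast_nonneg _)]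
      push_cast
      ring_nf
    rw [vol_l1b _ _ hs, hsum2] at hmeq
    have hkey := key_le (m+1) s Γ hs h2
    push_cast at hkey
    have hT : (0:ℝ) ≤ ((2*s)^(m+1) - (m+1)*(2*max (s-Γ) 0)^(m+1)) / (m+1).factorial :=
      div_nonneg (by linarith) (Nat.cast_nonneg _)
    refine (ENNReal.add_left_inj (a := ENNReal.ofReal
      ((m+1) * ((2*max (s-Γ) 0)^(m+1) / (m+1).factorial))) ENNReal.ofReal_ne_top).mp ?_
    rw [hmeq, ← ENNReal.ofReal_add _ (by positivity)]
    · congr 1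
      push_cast
      ring
    · push_cast
      exact hT

lemma int_sq_pow (c b : ℝ) (m : ℕ) : ∫ u in (0:ℝ)..b, u^2*(c-u)^m
    = c^2 * ((c^(m+1) - (c-b)^(m+1))/(m+1)) - 2*c*((c^(m+2) - (c-b)^(m+2))/(m+2))
      + (c^(m+3) - (c-b)^(m+3))/(m+3) := by
  have hid : ∀ u : ℝ, u^2*(c-u)^m = c^2*(c-u)^m - 2*c*(c-u)^(m+1) + (c-u)^(m+2) := by
    intro u; ring
  simp_rw [hid]
  rw [intervalIntegral.integral_add (by apply Continuous.intervalIntegrable; fun_prop)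
      (by apply Continuous.intervalIntegrable; fun_prop),
    intervalIntegral.integral_sub (by apply Continuous.intervalIntegrable; fun_prop)
      (by apply Continuous.intervalIntegrable; fun_prop),
    intervalIntegral.integral_const_mul, intervalIntegral.integral_const_mul,
    int_pow_sub, int_pow_sub, int_pow_sub]
  rw [sub_zero]
  push_cast
  ring

lemma max_trunc (m : ℕ) (r Γ : ℝ) (h0 : 0 ≤ r) (h1 : r ≤ Γ) :
    (m:ℝ) * ∫ u in (0:ℝ)..Γ, u^2*(max (r-u) 0)^m
      = m * ∫ u in (0:ℝ)..r, u^2*(r-u)^m := by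
  rcases Nat.eq_zero_or_pos m with hm | hm
  · simp [hm]
  congr 1
  have hsplit : ∫ u in (0:ℝ)..Γ, u^2*(max (r-u) 0)^m
      = (∫ u in (0:ℝ)..r, u^2*(max (r-u) 0)^m) + ∫ u in r..Γ, u^2*(max (r-u) 0)^m := by
    rw [intervalIntegral.integral_add_adjacent_intervals
      (by apply Continuous.intervalIntegrable; fun_prop)
      (by apply Continuous.intervalIntegrable; fun_prop)]
  rw [hsplit]
  have e1 : ∫ u in (0:ℝ)..r, u^2*(max (r-u) 0)^m = ∫ u in (0:ℝ)..r, u^2*(r-u)^m := by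
    refine intervalIntegral.integral_congr fun u hu => ?_
    rw [uIcc_of_le h0] at hu
    rw [max_eq_left (by linarith [hu.2] : (0:ℝ) ≤ r - u)]
  have e2 : ∫ u in r..Γ, u^2*(max (r-u) 0)^m = ∫ u in r..Γ, (0:ℝ) := by
    refine intervalIntegral.integral_congr fun u hu => ?_
    rw [uIcc_of_le h1] at hu
    rw [max_eq_right (by linarith [hu.1] : r - u ≤ (0:ℝ)), zero_pow hm.ne', mul_zero]
  rw [e1, e2, intervalIntegral.integral_zero, add_zero]

lemma lint_bud_sq (m : ℕ) (ρ Γ : ℝ) (hΓ0 : 0 ≤ Γ) (hΓρ : Γ ≤ ρ) (hρ2 : ρ ≤ 2*Γ)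
    (i : Fin (m+1)) :
    ∫⁻ x in bud (m+1) ρ Γ, ENNReal.ofReal ((x i)^2)
      = ENNReal.ofReal (2 * ∫ u in (0:ℝ)..Γ,
          u^2 * (((2*(ρ-u))^m - m*(2*max (ρ-u-Γ) 0)^m) / m.factorial)) := by
  have hmeas : Measurable ((bud (m+1) ρ Γ).indicator
      (fun x : Fin (m+1) → ℝ => ENNReal.ofReal ((x i)^2))) :=
    (ENNReal.measurable_ofReal.comp ((measurable_pi_apply i).pow_const 2)).indicator
      (bud_meas _ _ _)
  rw [← lintegral_indicator (bud_meas _ _ _), lint_slice i _ hmeas]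
  have h2 : ∀ t : ℝ, (∫⁻ y : Fin m → ℝ, (bud (m+1) ρ Γ).indicator
      (fun x => ENNReal.ofReal ((x i)^2)) (i.insertNth t y))
      = if |t| ≤ Γ then ENNReal.ofReal (t^2) * volume (bud m (ρ-|t|) Γ) else 0 := by
    intro t
    by_cases ht : |t| ≤ Γ
    · rw [if_pos ht]
      have hp : ∀ y : Fin m → ℝ, (bud (m+1) ρ Γ).indicator
          (fun x => ENNReal.ofReal ((x i)^2)) (i.insertNth t y)
          = ENNReal.ofReal (t^2) * (bud m (ρ-|t|) Γ).indicator 1 y := by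
        intro y
        by_cases hy : y ∈ bud m (ρ-|t|) Γ
        · obtain ⟨hy1, hy2⟩ := hy
          have hmem : i.insertNth t y ∈ bud (m+1) ρ Γ := by
            refine ⟨?_, ?_⟩
            · rw [insertNth_sum]; linarith
            · refine (Fin.forall_iff_succAbove
                (P := fun j => |(i.insertNth t y : Fin (m+1) → ℝ) j| ≤ Γ) i).mpr ⟨?_, fun k => ?_⟩
              · rw [Fin.insertNth_apply_same]; exact ht
              · rw [Fin.insertNth_apply_succAbove]; exact hy2 k
          rw [indicator_of_mem hmem, indicator_of_mem (by exact ⟨hy1, hy2⟩)]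
          simp [Fin.insertNth_apply_same]
        · rw [indicator_of_notMem, indicator_of_notMem hy, mul_zero]
          intro hmem
          obtain ⟨hm1, hm2⟩ := hmem
          rw [insertNth_sum] at hm1
          refine hy ⟨by linarith, fun k => ?_⟩
          have := hm2 (i.succAbove k)
          rwa [Fin.insertNth_apply_succAbove] at this
      simp_rw [hp]
      rw [lintegral_const_mul _ (measurable_one.indicator (bud_meas _ _ _)),
        lintegral_indicator_one (bud_meas _ _ _)]
    · rw [if_neg ht]
      have hp : ∀ y : Fin m → ℝ, (bud (m+1) ρ Γ).indicator
          (fun x => ENNReal.ofReal ((x i)^2)) (i.insertNth t y) = 0 := by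
        intro y
        rw [indicator_of_notMem]
        intro hmem
        exact ht (by simpa [Fin.insertNth_apply_same] using hmem.2 i)
      simp_rw [hp]
      simp
  simp_rw [h2]
  have h3 : (fun t : ℝ => if |t| ≤ Γ then ENNReal.ofReal (t^2) * volume (bud m (ρ-|t|) Γ) else 0)
      = (Icc (-Γ) Γ).indicator (fun t => ENNReal.ofReal
          (t^2 * (((2*(ρ-|t|))^m - m*(2*max (ρ-|t|-Γ) 0)^m) / m.factorial))) := by
    funext t
    by_cases ht : t ∈ Icc (-Γ) Γ
    · have habs : |t| ≤ Γ := abs_le.mpr (mem_Icc.mp ht)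
      rw [indicator_of_mem ht, if_pos habs,
        vol_bud m (ρ-|t|) Γ (by linarith) hΓ0 (by have := abs_nonneg t; linarith),
        ← ENNReal.ofReal_mul (sq_nonneg t)]
    · rw [indicator_of_notMem ht,
        if_neg (fun h => ht (mem_Icc.mpr (abs_le.mp h)))]
  rw [h3, lintegral_indicator measurableSet_Icc]
  have hTnn : ∀ t : ℝ, |t| ≤ Γ →
      0 ≤ ((2*(ρ-|t|))^m - m*(2*max (ρ-|t|-Γ) 0)^m) / m.factorial := by
    intro t htle
    refine div_nonneg (sub_nonneg.mpr ?_) (Nat.cast_nonneg _)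
    have h1 : (0:ℝ) ≤ ρ - |t| := by linarith
    have h2 : ρ - |t| ≤ 2*Γ := by have := abs_nonneg t; linarith
    exact key_le m (ρ-|t|) Γ h1 h2
  have key := lint_Icc
    (g := fun t => t^2 * (((2*(ρ-|t|))^m - m*(2*max (ρ-|t|-Γ) 0)^m) / m.factorial))
    (a := -Γ) (b := Γ) (by fun_prop) (by linarith)
    (fun t ht => mul_nonneg (sq_nonneg t) (hTnn t (abs_le.mpr (mem_Icc.mp ht))))
  rw [key]
  congr 1
  have hg : ∀ t : ℝ, t^2 * (((2*(ρ-|t|))^m - m*(2*max (ρ-|t|-Γ) 0)^m) / m.factorial)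
      = (fun u => u^2 * (((2*(ρ-u))^m - m*(2*max (ρ-u-Γ) 0)^m) / m.factorial)) |t| := by
    intro t; simp only; rw [sq_abs]
  simp_rw [hg]
  exact int_sym
    (g := fun u => u^2 * (((2*(ρ-u))^m - m*(2*max (ρ-u-Γ) 0)^m) / m.factorial))
    (by fun_prop) hΓ0

theorem budget_set_second_moment (n : ℕ) (hn : 1 ≤ n) (ρ Γ : ℝ) (hρ : 0 < ρ)
    (hΓ1 : ρ / 2 ≤ Γ) (hΓ2 : Γ ≤ ρ) (i : Fin n) :
    ∫ x in {x : Fin n → ℝ | ∑ k, |x k| ≤ ρ ∧ ∀ k, |x k| ≤ Γ}, (x i) ^ 2 =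
      (2 * ρ ^ 2 / ((n + 1) * (n + 2))) * (((2 * ρ) ^ n - n * (2 * (ρ - Γ)) ^ n) / n.factorial)
      - ((2 * (ρ - Γ)) ^ n / n.factorial) *
        (((n ^ 2 + 3 * n - 2 : ℝ) * Γ ^ 2 + (4 - 2 * n) * ρ * Γ) / ((n + 1) * (n + 2))) := by
  obtain ⟨m, rfl⟩ : ∃ m, n = m + 1 := ⟨n - 1, (Nat.succ_pred_eq_of_pos hn).symm⟩
  have hΓ0 : 0 ≤ Γ := le_trans (by linarith) hΓ1
  have hρ2 : ρ ≤ 2*Γ := by linarith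
  have hset : {x : Fin (m+1) → ℝ | ∑ k, |x k| ≤ ρ ∧ ∀ k, |x k| ≤ Γ} = bud (m+1) ρ Γ := rfl
  rw [hset]
  rw [integral_eq_lintegral_of_nonneg_ae (by filter_upwards with x using sq_nonneg _)
    (((continuous_apply i).pow 2).aestronglyMeasurable)]
  rw [lint_bud_sq m ρ Γ hΓ0 hΓ2 hρ2 i]
  have hTnn : ∀ u : ℝ, 0 ≤ u → u ≤ Γ →
      0 ≤ ((2*(ρ-u))^m - m*(2*max (ρ-u-Γ) 0)^m) / m.factorial := by
    intro u h0 h1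
    refine div_nonneg (sub_nonneg.mpr ?_) (Nat.cast_nonneg _)
    exact key_le m (ρ-u) Γ (by linarith) (by linarith)
  have hEnn : 0 ≤ 2 * ∫ u in (0:ℝ)..Γ,
      u^2 * (((2*(ρ-u))^m - m*(2*max (ρ-u-Γ) 0)^m) / m.factorial) := by
    refine mul_nonneg (by norm_num) (intervalIntegral.integral_nonneg hΓ0 fun u hu => ?_)
    exact mul_nonneg (sq_nonneg _) (hTnn u hu.1 hu.2)
  rw [ENNReal.toReal_ofReal hEnn]
  -- now evaluate the 1-D integral
  have hsplit : ∀ u : ℝ, u^2 * (((2*(ρ-u))^m - m*(2*max (ρ-u-Γ) 0)^m) / m.factorial)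
      = (2^m/m.factorial) * (u^2*(ρ-u)^m)
        - (m*2^m/m.factorial) * (u^2*(max (ρ-Γ-u) 0)^m) := by
    intro u
    rw [show ρ-u-Γ = ρ-Γ-u by ring, mul_pow, mul_pow]
    ring
  simp_rw [hsplit]
  rw [intervalIntegral.integral_sub (by apply Continuous.intervalIntegrable; fun_prop)
      (by apply Continuous.intervalIntegrable; fun_prop),
    intervalIntegral.integral_const_mul, intervalIntegral.integral_const_mul]
  have htr := max_trunc m (ρ-Γ) Γ (by linarith) (by linarith)
  have hstep : (m*2^m/m.factorial : ℝ) * ∫ u in (0:ℝ)..Γ, u^2*(max (ρ-Γ-u) 0)^m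
      = (2^m/m.factorial) * ((m:ℝ) * ∫ u in (0:ℝ)..(ρ-Γ), u^2*(ρ-Γ-u)^m) := by
    rw [← htr]; ring
  rw [show (2^m/m.factorial : ℝ) * (∫ u in (0:ℝ)..Γ, u^2*(ρ-u)^m)
        - (m*2^m/m.factorial : ℝ) * ∫ u in (0:ℝ)..Γ, u^2*(max (ρ-Γ-u) 0)^m
      = (2^m/m.factorial) * (∫ u in (0:ℝ)..Γ, u^2*(ρ-u)^m)
        - (2^m/m.factorial) * ((m:ℝ) * ∫ u in (0:ℝ)..(ρ-Γ), u^2*(ρ-Γ-u)^m) by rw [hstep]]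
  rw [int_sq_pow, int_sq_pow, sub_self]
  simp only [zero_pow (Nat.succ_ne_zero _), Nat.add_eq]
  have hfac : (((m+1)).factorial : ℝ) = (m+1) * m.factorial := by
    rw [Nat.factorial_succ]; push_cast; ring
  have hm0 : (m.factorial : ℝ) ≠ 0 := Nat.cast_ne_zero.2 m.factorial_ne_zero
  have h1 : ((m:ℝ)+1) ≠ 0 := by positivity
  have h2 : ((m:ℝ)+2) ≠ 0 := by positivity
  have h3 : ((m:ℝ)+3) ≠ 0 := by positivity
  rw [hfac]
  push_cast
  simp only [mul_pow, pow_add, pow_one]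
  field_simp
  ring
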